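/- Let S, K₁ ⊆ K₂ be subrings of a finite ring R. Then Pr(S,K₁) ≥ Pr(S,K₂) ≥ (1/|K₂:K₁|)·(Pr(S,K₁) + (|K₂|-|K₁|)/(|S||K₁|)). -/

import Mathlib

/-- additive centralizer of `s` -/
def cenA {R : Type*} [NonUnitalRing R] (s : R) : AddSubgroup R where
  carrier := {k | s * k = k * s}
  zero_mem' := by simp
  add_mem' := by
    intro a b ha hb
    simp only [Set.mem_setOf_eq] at *
    rw [mul_add, add_mul, ha, hb]
  neg_mem' := by
    intro a ha
    simp only [Set.mem_setOf_eq] at *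
    rw [mul_neg, neg_mul, ha]

lemma nat_card_sigma {ι : Type*} [Fintype ι] (f : ι → Type*) [∀ i, Finite (f i)] :
    Nat.card (Σ i, f i) = ∑ i, Nat.card (f i) := by
  letI : ∀ i, Fintype (f i) := fun i => Fintype.ofFinite _
  simp [Nat.card_eq_fintype_card]

lemma card_inf_mul_relindex {G : Type*} [AddGroup G] [Finite G] (A B : AddSubgroup G) :
    Nat.card (A ⊓ B : AddSubgroup G) * A.relIndex B = Nat.card B := by
  have h1 : Nat.card (A.addSubgroupOf B) * (A.addSubgroupOf B).index = Nat.card B :=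
    AddSubgroup.card_mul_index _
  have h2 : Nat.card (A.addSubgroupOf B) = Nat.card (A ⊓ B : AddSubgroup G) := by
    rw [← AddSubgroup.inf_addSubgroupOf_right A B]
    exact Nat.card_congr (AddSubgroup.addSubgroupOfEquivOfLe inf_le_right).toEquiv
  rw [← h2]; exact h1

lemma card_inf_mul_le {G : Type*} [AddGroup G] [Finite G] (C K₁ K₂ : AddSubgroup G)
    (h : K₁ ≤ K₂) :
    Nat.card (C ⊓ K₂ : AddSubgroup G) * Nat.card K₁ ≤
      Nat.card (C ⊓ K₁ : AddSubgroup G) * Nat.card K₂ := by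
  have e2 : Nat.card K₁ * K₁.relIndex K₂ = Nat.card K₂ := by
    have := card_inf_mul_relindex K₁ K₂
    rwa [inf_eq_left.mpr h] at this
  have e1 : Nat.card (C ⊓ K₁ : AddSubgroup G) * K₁.relIndex (C ⊓ K₂) =
      Nat.card (C ⊓ K₂ : AddSubgroup G) := by
    have := card_inf_mul_relindex K₁ (C ⊓ K₂)
    rwa [inf_left_comm, inf_eq_left.mpr h] at this
  have hne : K₁.relIndex K₂ ≠ 0 := by
    intro h0
    rw [h0, mul_zero] at e2
    exact (Nat.card_pos (α := K₂)).ne' e2.symm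
  have hr : K₁.relIndex (C ⊓ K₂) ≤ K₁.relIndex K₂ :=
    AddSubgroup.relIndex_le_of_le_right inf_le_right hne
  calc Nat.card (C ⊓ K₂ : AddSubgroup G) * Nat.card K₁
      = Nat.card (C ⊓ K₁ : AddSubgroup G) * K₁.relIndex (C ⊓ K₂) * Nat.card K₁ := by rw [e1]
    _ ≤ Nat.card (C ⊓ K₁ : AddSubgroup G) * K₁.relIndex K₂ * Nat.card K₁ :=
        Nat.mul_le_mul_right _ (Nat.mul_le_mul_left _ hr)
    _ = Nat.card (C ⊓ K₁ : AddSubgroup G) * Nat.card K₂ := by rw [mul_assoc, mul_comm (K₁.relIndex K₂), e2]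

lemma count_mono {R : Type*} [NonUnitalRing R] [Fintype R]
    (S K₁ K₂ : NonUnitalSubring R) (hK : K₁ ≤ K₂) :
    Nat.card {p : R × R // p.1 ∈ S ∧ p.2 ∈ K₂ ∧ p.1 * p.2 - p.2 * p.1 = 0} * Nat.card K₁ ≤
      Nat.card {p : R × R // p.1 ∈ S ∧ p.2 ∈ K₁ ∧ p.1 * p.2 - p.2 * p.1 = 0} * Nat.card K₂ := by
  classical
  have key : ∀ K : NonUnitalSubring R,
      Nat.card {p : R × R // p.1 ∈ S ∧ p.2 ∈ K ∧ p.1 * p.2 - p.2 * p.1 = 0}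
        = ∑ s : S, Nat.card ((cenA (s : R)) ⊓ K.toAddSubgroup : AddSubgroup R) := by
    intro K
    have e : {p : R × R // p.1 ∈ S ∧ p.2 ∈ K ∧ p.1 * p.2 - p.2 * p.1 = 0} ≃
        Σ s : S, ((cenA (s : R)) ⊓ K.toAddSubgroup : AddSubgroup R) :=
      { toFun := fun p => ⟨⟨p.1.1, p.2.1⟩, ⟨p.1.2,
          AddSubgroup.mem_inf.mpr ⟨sub_eq_zero.mp p.2.2.2, p.2.2.1⟩⟩⟩
        invFun := fun x => ⟨(x.1.1, x.2.1), x.1.2,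
          (AddSubgroup.mem_inf.mp x.2.2).2,
          sub_eq_zero.mpr (AddSubgroup.mem_inf.mp x.2.2).1⟩
        left_inv := fun p => rfl
        right_inv := fun x => rfl }
    rw [Nat.card_congr e, nat_card_sigma]
  have hK' : K₁.toAddSubgroup ≤ K₂.toAddSubgroup := fun x hx => hK hx
  rw [key K₁, key K₂, Finset.sum_mul, Finset.sum_mul]
  exact Finset.sum_le_sum fun s _ =>
    card_inf_mul_le (cenA (s : R)) K₁.toAddSubgroup K₂.toAddSubgroup hK'

lemma count_lower {R : Type*} [NonUnitalRing R] [Fintype R]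
    (S K₁ K₂ : NonUnitalSubring R) (hK : K₁ ≤ K₂) :
    Nat.card {p : R × R // p.1 ∈ S ∧ p.2 ∈ K₁ ∧ p.1 * p.2 - p.2 * p.1 = 0} +
        (Nat.card K₂ - Nat.card K₁) ≤
      Nat.card {p : R × R // p.1 ∈ S ∧ p.2 ∈ K₂ ∧ p.1 * p.2 - p.2 * p.1 = 0} := by
  classical
  set A := {p : R × R // p.1 ∈ S ∧ p.2 ∈ K₁ ∧ p.1 * p.2 - p.2 * p.1 = 0}
  set B := {p : R × R // p.1 ∈ S ∧ p.2 ∈ K₂ ∧ p.1 * p.2 - p.2 * p.1 = 0}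
  set D := {k : R // k ∈ K₂ ∧ k ∉ K₁}
  let f : A ⊕ D → B := fun x =>
    match x with
    | .inl p => ⟨p.1, p.2.1, hK p.2.2.1, p.2.2.2⟩
    | .inr k => ⟨(0, k.1), S.zero_mem, k.2.1, by simp⟩
  have hf : Function.Injective f := by
    rintro (⟨⟨p1, p2⟩, hp⟩ | ⟨k, hk⟩) (⟨⟨q1, q2⟩, hq⟩ | ⟨l, hl⟩) h <;>
      simp only [f] at h
    · have h' : ((p1, p2) : R × R) = (q1, q2) := congrArg Subtype.val h
      exact congrArg Sum.inl (Subtype.ext h')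
    · have h' : ((p1, p2) : R × R) = (0, l) := congrArg Subtype.val h
      have h2 : p2 = l := congrArg Prod.snd h'
      exact (hl.2 (h2 ▸ hp.2.1)).elim
    · have h' : ((0, k) : R × R) = (q1, q2) := congrArg Subtype.val h
      have h2 : k = q2 := congrArg Prod.snd h'
      exact (hk.2 (h2 ▸ hq.2.1)).elim
    · have h' : ((0, k) : R × R) = (0, l) := congrArg Subtype.val h
      exact congrArg Sum.inr (Subtype.ext (congrArg Prod.snd h'))
  have hcard : Nat.card (A ⊕ D) ≤ Nat.card B := Nat.card_le_card_of_injective f hf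
  rw [Nat.card_sum] at hcard
  have hD : Nat.card D = Nat.card K₂ - Nat.card K₁ := by
    have h1 : Nat.card D = ((K₂ : Set R) \ (K₁ : Set R)).ncard := by
      have : ((K₂ : Set R) \ (K₁ : Set R)) = {k | k ∈ K₂ ∧ k ∉ K₁} := rfl
      rw [this, ← Nat.card_coe_set_eq]
      rfl
    have h2 : Nat.card K₂ = (K₂ : Set R).ncard := by
      rw [← Nat.card_coe_set_eq]; rfl
    have h3 : Nat.card K₁ = (K₁ : Set R).ncard := by
      rw [← Nat.card_coe_set_eq]; rfl
    rw [h1, Set.ncard_diff hK (Set.toFinite _), h2, h3]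
  rw [hD] at hcard
  exact hcard


/-- `Pr_r(S,K)`: the probability that a uniformly random pair `(s,k) ∈ S × K`
satisfies `s*k - k*s = r`. -/
noncomputable def ringPr {R : Type*} [NonUnitalRing R] [Fintype R]
    (S K : NonUnitalSubring R) (r : R) : ℚ :=
  (Nat.card {p : R × R // p.1 ∈ S ∧ p.2 ∈ K ∧ p.1 * p.2 - p.2 * p.1 = r} : ℚ) /
    ((Nat.card S : ℚ) * (Nat.card K : ℚ))

theorem ringPr_mono_and_lower {R : Type*} [NonUnitalRing R] [Fintype R]
    (S K₁ K₂ : NonUnitalSubring R) (hK : K₁ ≤ K₂) :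
    ringPr S K₁ 0 ≥ ringPr S K₂ 0 ∧
      ringPr S K₂ 0 ≥ (1 / ((Nat.card K₂ : ℚ) / (Nat.card K₁ : ℚ))) *
        (ringPr S K₁ 0 +
          ((Nat.card K₂ : ℚ) - (Nat.card K₁ : ℚ)) / ((Nat.card S : ℚ) * (Nat.card K₁ : ℚ))) := by
  classical
  haveI : Nonempty S := ⟨⟨0, S.zero_mem⟩⟩
  haveI : Nonempty K₁ := ⟨⟨0, K₁.zero_mem⟩⟩
  haveI : Nonempty K₂ := ⟨⟨0, K₂.zero_mem⟩⟩
  have hS : (0 : ℚ) < Nat.card S := by exact_mod_cast Nat.card_pos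
  have h1 : (0 : ℚ) < Nat.card K₁ := by exact_mod_cast Nat.card_pos
  have h2 : (0 : ℚ) < Nat.card K₂ := by exact_mod_cast Nat.card_pos
  have hle : Nat.card K₁ ≤ Nat.card K₂ := by
    have e1 : Nat.card K₁ = (K₁ : Set R).ncard := by rw [← Nat.card_coe_set_eq]; rfl
    have e2 : Nat.card K₂ = (K₂ : Set R).ncard := by rw [← Nat.card_coe_set_eq]; rfl
    rw [e1, e2]; exact Set.ncard_le_ncard hK (Set.toFinite _)
  have hmono := count_mono S K₁ K₂ hK
  have hlow := count_lower S K₁ K₂ hK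
  set n₁ := Nat.card {p : R × R // p.1 ∈ S ∧ p.2 ∈ K₁ ∧ p.1 * p.2 - p.2 * p.1 = 0} with hn₁
  set n₂ := Nat.card {p : R × R // p.1 ∈ S ∧ p.2 ∈ K₂ ∧ p.1 * p.2 - p.2 * p.1 = 0} with hn₂
  have hmq : (n₂ : ℚ) * Nat.card K₁ ≤ (n₁ : ℚ) * Nat.card K₂ := by exact_mod_cast hmono
  have hlq : (n₁ : ℚ) + ((Nat.card K₂ : ℚ) - Nat.card K₁) ≤ (n₂ : ℚ) := by
    have := (Nat.cast_le (α := ℚ)).mpr hlow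
    rwa [Nat.cast_add, Nat.cast_sub hle] at this
  constructor
  · show ringPr S K₂ 0 ≤ ringPr S K₁ 0
    simp only [ringPr]
    rw [div_le_div_iff₀ (by positivity) (by positivity)]
    nlinarith [hmq, hS]
  · show _ ≤ ringPr S K₂ 0
    simp only [ringPr]
    have hrw : (1 / ((Nat.card K₂ : ℚ) / Nat.card K₁)) *
        ((n₁ : ℚ) / (Nat.card S * Nat.card K₁) +
          ((Nat.card K₂ : ℚ) - Nat.card K₁) / (Nat.card S * Nat.card K₁)) =
        ((n₁ : ℚ) + ((Nat.card K₂ : ℚ) - Nat.card K₁)) / (Nat.card S * Nat.card K₂) := by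
      field_simp
    rw [hrw]
    rw [← hn₂]
    gcongr
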